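/- Let Δ_LB denote the Laplace–Beltrami operator (Δ_LB ψ)(μ) = d/dμ((1−μ²) dψ/dμ) on [-1,1]. For every ψ in the weighted Sobolev space V = {v ∈ L²(-1,1) : √(1−μ²) v' ∈ L²(-1,1)} and Δt > 0, if g ∈ L²(-1,1) with g ≥ 0 a.e. and ψ is the weak solution of (I − (Δt/2)Δ_LB)ψ = g, then ψ ≥ 0 a.e. on (-1,1). -/

import Mathlib

set_option maxHeartbeats 1000000


open MeasureTheory

/-- Basic facts about `√(x² + ε²)`. -/
lemma sqrt_facts (ε x : ℝ) (hε : 0 < ε) :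
    0 < Real.sqrt (x ^ 2 + ε ^ 2) ∧ |x| ≤ Real.sqrt (x ^ 2 + ε ^ 2) ∧
      Real.sqrt (x ^ 2 + ε ^ 2) ≤ |x| + ε := by
  have h0 : (0 : ℝ) ≤ x ^ 2 + ε ^ 2 := by positivity
  have hs : Real.sqrt (x ^ 2 + ε ^ 2) ^ 2 = x ^ 2 + ε ^ 2 := Real.sq_sqrt h0
  have hs0 : 0 ≤ Real.sqrt (x ^ 2 + ε ^ 2) := Real.sqrt_nonneg _
  have hax : 0 ≤ |x| := abs_nonneg x
  have hax2 : |x| ^ 2 = x ^ 2 := sq_abs x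
  refine ⟨?_, ?_, ?_⟩
  · nlinarith [sq_nonneg x]
  · nlinarith
  · nlinarith

/-- Membership in the weighted Sobolev space
`V = {v ∈ L²(-1,1) : √(1-μ²) v' ∈ L²(-1,1)}`. -/
def MemV (v : ℝ → ℝ) : Prop :=
  IntegrableOn (fun μ => v μ ^ 2) (Set.Ioo (-1 : ℝ) 1) ∧
  IntegrableOn (fun μ => (1 - μ ^ 2) * (deriv v μ) ^ 2) (Set.Ioo (-1 : ℝ) 1) ∧
  DifferentiableOn ℝ v (Set.Ioo (-1 : ℝ) 1)

/-- the weak solution `ψ ∈ V` of `(I − (Δt/2)Δ_LB)ψ = g`, i.e.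
`(v,ψ)_V = ∫ v g` for all `v ∈ V`, with `g ∈ L²` nonnegative a.e., is itself
nonnegative a.e. on `(-1,1)`. -/
theorem implicit_laplace_beltrami_preserves_nonnegativity
    (Δt : ℝ) (hΔt : 0 < Δt)
    (g ψ : ℝ → ℝ)
    (hg_mem : IntegrableOn (fun μ => g μ ^ 2) (Set.Ioo (-1 : ℝ) 1))
    (hg_nonneg : ∀ᵐ μ ∂(volume.restrict (Set.Ioo (-1 : ℝ) 1)), 0 ≤ g μ)
    (hψ : MemV ψ)
    (hweak : ∀ v : ℝ → ℝ, MemV v →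
      ∫ μ in Set.Ioo (-1 : ℝ) 1,
          (v μ * ψ μ + Δt * (1 - μ ^ 2) * deriv v μ * deriv ψ μ)
        = ∫ μ in Set.Ioo (-1 : ℝ) 1, v μ * g μ) :
    ∀ᵐ μ ∂(volume.restrict (Set.Ioo (-1 : ℝ) 1)), 0 ≤ ψ μ := by
  set S : Set ℝ := Set.Ioo (-1 : ℝ) 1 with hS
  have hSmeas : MeasurableSet S := measurableSet_Ioo
  have hSopen : IsOpen S := isOpen_Ioo
  have hSfin : volume S < ⊤ := by
    simp [hS, Real.volume_Ioo]
  -- continuity / measurability of ψ on S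
  have hψdiff := hψ.2.2
  have hψat : ∀ μ ∈ S, DifferentiableAt ℝ ψ μ := fun μ hμ =>
    (hψdiff μ hμ).differentiableAt (hSopen.mem_nhds hμ)
  have hψc : ContinuousOn ψ S := hψdiff.continuousOn
  have hψm : AEStronglyMeasurable ψ (volume.restrict S) :=
    hψc.aestronglyMeasurable hSmeas
  -- |ψ| is integrable on S
  have habs_int : IntegrableOn (fun μ => |ψ μ|) S := by
    have h1 : IntegrableOn (fun μ => ψ μ ^ 2 + 1) S :=
      hψ.1.add (integrableOn_const hSfin.ne)
    refine h1.mono' hψm.norm ?_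
    filter_upwards with μ
    have : |ψ μ| ≤ ψ μ ^ 2 + 1 := by
      nlinarith [sq_abs (ψ μ), abs_nonneg (ψ μ), sq_nonneg (|ψ μ| - 1)]
    simpa [abs_abs] using this
  -- (min ψ 0)^2 is integrable on S
  have hmin_int : IntegrableOn (fun μ => min (ψ μ) 0 ^ 2) S := by
    have heq : (fun μ => min (ψ μ) 0 ^ 2) = fun μ => ((ψ μ - |ψ μ|) / 2) ^ 2 := by
      funext μ
      rcases le_total (ψ μ) 0 with h | h
      · rw [min_eq_left h, abs_of_nonpos h]; ring
      · rw [min_eq_right h, abs_of_nonneg h]; ring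
    have h1 : IntegrableOn (fun μ => ψ μ ^ 2) S := hψ.1
    rw [heq]
    refine h1.mono'
      ((((hψc.sub hψc.abs).div_const 2).pow 2).aestronglyMeasurable hSmeas) ?_
    filter_upwards with μ
    have h2 : ((ψ μ - |ψ μ|) / 2) ^ 2 ≤ ψ μ ^ 2 := by
      rcases le_total (ψ μ) 0 with h | h
      · rw [abs_of_nonpos h]; nlinarith [sq_nonneg (ψ μ)]
      · rw [abs_of_nonneg h]; simpa using sq_nonneg (ψ μ)
    rw [Real.norm_eq_abs, abs_of_nonneg (sq_nonneg ((ψ μ - |ψ μ|) / 2))]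
    exact h2
  set A : ℝ := ∫ μ in S, min (ψ μ) 0 ^ 2 with hA
  set B : ℝ := ∫ μ in S, |ψ μ| with hB
  have hB0 : 0 ≤ B := integral_nonneg fun μ => abs_nonneg _
  -- MAIN STEP: for every ε > 0, A ≤ ε/2 * B
  have key : ∀ ε : ℝ, 0 < ε → A ≤ ε / 2 * B := by
    intro ε hε
    set s : ℝ → ℝ := fun μ => Real.sqrt (ψ μ ^ 2 + ε ^ 2) with hsdef
    set v : ℝ → ℝ := fun μ => (ψ μ - s μ) / 2 with hvdef
    set c : ℝ → ℝ := fun μ => (1 - ψ μ / s μ) / 2 with hcdef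
    have hsf : ∀ μ, 0 < s μ ∧ |ψ μ| ≤ s μ ∧ s μ ≤ |ψ μ| + ε := fun μ =>
      sqrt_facts ε (ψ μ) hε
    have hc0 : ∀ μ, 0 ≤ c μ ∧ c μ ≤ 1 := by
      intro μ
      obtain ⟨h1, h2, _⟩ := hsf μ
      have hle : ψ μ / s μ ≤ 1 := (div_le_one h1).2 ((le_abs_self _).trans h2)
      have hge : -1 ≤ ψ μ / s μ := by
        rw [neg_le, ← neg_div]
        exact (div_le_one h1).2 ((neg_le_abs _).trans h2)
      constructor <;> simp only [hcdef] <;> linarith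
    have hvneg : ∀ μ, v μ ≤ 0 := by
      intro μ
      obtain ⟨_, h2, _⟩ := hsf μ
      have := le_abs_self (ψ μ)
      simp only [hvdef]
      linarith
    have hvabs : ∀ μ, |v μ| ≤ |ψ μ| + ε / 2 := by
      intro μ
      obtain ⟨_, h2, h3⟩ := hsf μ
      have h4 := neg_abs_le (ψ μ)
      rw [abs_of_nonpos (hvneg μ)]
      simp only [hvdef]
      linarith
    have hkey_pt : ∀ μ, min (ψ μ) 0 ^ 2 ≤ v μ * ψ μ + ε / 2 * |ψ μ| := by
      intro μ
      obtain ⟨h1, h2, h3⟩ := hsf μ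
      rcases le_total (ψ μ) 0 with h | h
      · rw [min_eq_left h, abs_of_nonpos h]
        have h2' : -(ψ μ) ≤ s μ := by rw [← abs_of_nonpos h]; exact h2
        have hsx : (-(ψ μ)) * (-(ψ μ)) ≤ s μ * (-(ψ μ)) :=
          mul_le_mul_of_nonneg_right h2' (neg_nonneg.2 h)
        have hεψ : 0 ≤ ε * (-(ψ μ)) := mul_nonneg hε.le (neg_nonneg.2 h)
        simp only [hvdef]
        nlinarith [hsx, hεψ]
      · rw [min_eq_right h, abs_of_nonneg h]
        have habs : |ψ μ| = ψ μ := abs_of_nonneg h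
        simp only [hvdef]
        nlinarith [h3, h]
    -- derivative of v on S
    have hderiv : ∀ μ ∈ S, HasDerivAt v (deriv ψ μ * c μ) μ := by
      intro μ hμ
      obtain ⟨h1, _, _⟩ := hsf μ
      have hψd : HasDerivAt ψ (deriv ψ μ) μ := (hψat μ hμ).hasDerivAt
      have h2 : HasDerivAt (fun t => ψ t ^ 2 + ε ^ 2)
          (2 * ψ μ * deriv ψ μ) μ := by
        have := (hψd.pow 2).add_const (ε ^ 2)
        simpa [mul_comm, mul_assoc, mul_left_comm] using this
      have hne : ψ μ ^ 2 + ε ^ 2 ≠ 0 := by positivity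
      have h3 : HasDerivAt Real.sqrt (1 / (2 * Real.sqrt (ψ μ ^ 2 + ε ^ 2)))
          (ψ μ ^ 2 + ε ^ 2) := Real.hasDerivAt_sqrt hne
      have h4 : HasDerivAt (fun t => s t)
          (1 / (2 * Real.sqrt (ψ μ ^ 2 + ε ^ 2)) * (2 * ψ μ * deriv ψ μ)) μ :=
        HasDerivAt.comp μ h3 h2
      have h5 : HasDerivAt v
          ((deriv ψ μ - 1 / (2 * Real.sqrt (ψ μ ^ 2 + ε ^ 2)) *
            (2 * ψ μ * deriv ψ μ)) / 2) μ := (hψd.sub h4).div_const 2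
      convert h5 using 1
      have hs1 : s μ ≠ 0 := ne_of_gt h1
      simp only [hcdef, hsdef] at *
      field_simp
    have hderiv_eq : ∀ μ ∈ S, deriv v μ = deriv ψ μ * c μ := fun μ hμ =>
      (hderiv μ hμ).deriv
    -- v is continuous on S
    have hvc : ContinuousOn v S := by
      apply ContinuousOn.div_const
      apply hψc.sub
      exact Real.continuous_sqrt.comp_continuousOn
        (((hψc.pow 2).add continuousOn_const))
    -- MemV v
    have hv2_int : IntegrableOn (fun μ => v μ ^ 2) S := by
      have h1 : IntegrableOn (fun μ => 2 * ψ μ ^ 2 + ε ^ 2) S :=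
        (hψ.1.const_mul 2).add (integrableOn_const hSfin.ne)
      refine h1.mono' ((hvc.pow 2).aestronglyMeasurable hSmeas) ?_
      filter_upwards with μ
      have h1 := hvabs μ
      have h2 := abs_nonneg (v μ)
      have h3 := abs_nonneg (ψ μ)
      have h4 : |v μ| * |v μ| ≤ (|ψ μ| + ε / 2) * (|ψ μ| + ε / 2) :=
        mul_le_mul h1 h1 h2 (by positivity)
      rw [Real.norm_eq_abs, abs_of_nonneg (sq_nonneg (v μ))]
      nlinarith [sq_abs (v μ), sq_abs (ψ μ), sq_nonneg (|ψ μ| - ε), hε.le]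
    have hdvm : AEStronglyMeasurable (deriv v) (volume.restrict S) :=
      (measurable_deriv v).aestronglyMeasurable
    have hvd_int : IntegrableOn (fun μ => (1 - μ ^ 2) * deriv v μ ^ 2) S := by
      have h1 : IntegrableOn (fun μ => (1 - μ ^ 2) * deriv ψ μ ^ 2) S :=
        hψ.2.1
      refine h1.mono' (((continuous_const.sub (continuous_pow 2)).aestronglyMeasurable).mul
          (hdvm.pow 2)) ?_
      rw [ae_restrict_iff' hSmeas]
      filter_upwards with μ hμ
      have h1mu : 0 ≤ 1 - μ ^ 2 := by
        obtain ⟨ha, hb⟩ := hμ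
        nlinarith
      rw [hderiv_eq μ hμ, Real.norm_eq_abs, abs_of_nonneg (by positivity)]
      have hc := hc0 μ
      have hc2 : c μ ^ 2 ≤ 1 := by nlinarith [hc.1, hc.2]
      have hkey := mul_le_mul_of_nonneg_left hc2
        (mul_nonneg h1mu (sq_nonneg (deriv ψ μ)))
      nlinarith [hkey]
    have hvmem : MemV v := ⟨hv2_int, hvd_int, fun μ hμ =>
      ((hderiv μ hμ).differentiableAt).differentiableWithinAt⟩
    -- integrability of the pieces
    have hvψ_int : IntegrableOn (fun μ => v μ * ψ μ) S := by
      have h1 : IntegrableOn (fun μ => ψ μ ^ 2 + ε / 2 * |ψ μ|) S :=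
        hψ.1.add (habs_int.const_mul (ε / 2))
      refine h1.mono' ((hvc.mul hψc).aestronglyMeasurable hSmeas) ?_
      filter_upwards with μ
      rw [Real.norm_eq_abs, abs_mul]
      have h1 := hvabs μ
      have h3 := abs_nonneg (ψ μ)
      nlinarith [sq_abs (ψ μ), abs_nonneg (v μ)]
    have hsnd_int : IntegrableOn
        (fun μ => Δt * (1 - μ ^ 2) * deriv v μ * deriv ψ μ) S := by
      have h1 : IntegrableOn (fun μ => Δt * ((1 - μ ^ 2) * deriv ψ μ ^ 2)) S :=
        hψ.2.1.const_mul Δt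
      refine h1.mono' ((((aestronglyMeasurable_const.mul
            ((continuous_const.sub (continuous_pow 2)).aestronglyMeasurable)).mul hdvm).mul
          (measurable_deriv ψ).aestronglyMeasurable)) ?_
      rw [ae_restrict_iff' hSmeas]
      filter_upwards with μ hμ
      have h1mu : 0 ≤ 1 - μ ^ 2 := by
        obtain ⟨ha, hb⟩ := hμ
        nlinarith
      rw [hderiv_eq μ hμ]
      have hc := hc0 μ
      rw [Real.norm_eq_abs, abs_mul, abs_mul, abs_mul,
        abs_of_pos hΔt, abs_of_nonneg h1mu]
      have h2 : |deriv ψ μ * c μ| * |deriv ψ μ| ≤ deriv ψ μ ^ 2 := by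
        rw [abs_mul, abs_of_nonneg hc.1]
        have ha := abs_nonneg (deriv ψ μ)
        nlinarith [sq_abs (deriv ψ μ), hc.1, hc.2,
          mul_nonneg (mul_nonneg ha ha) (sub_nonneg.2 hc.2)]
      have hkey := mul_le_mul_of_nonneg_left h2 (mul_nonneg hΔt.le h1mu)
      nlinarith [hkey]
    have hF_int : IntegrableOn
        (fun μ => v μ * ψ μ + Δt * (1 - μ ^ 2) * deriv v μ * deriv ψ μ) S :=
      hvψ_int.add hsnd_int
    -- the weak formulation applied to v
    have hwv := hweak v hvmem
    -- RHS is nonpositive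
    have hRHS : (∫ μ in S, v μ * g μ) ≤ 0 := by
      apply integral_nonpos_of_ae
      filter_upwards [hg_nonneg] with μ hg
      exact mul_nonpos_of_nonpos_of_nonneg (hvneg μ) hg
    -- lower bound for LHS
    have hlow_int : IntegrableOn (fun μ => min (ψ μ) 0 ^ 2 - ε / 2 * |ψ μ|) S :=
      hmin_int.sub (habs_int.const_mul (ε / 2))
    have hlow : (∫ μ in S, (min (ψ μ) 0 ^ 2 - ε / 2 * |ψ μ|)) ≤
        ∫ μ in S, (v μ * ψ μ + Δt * (1 - μ ^ 2) * deriv v μ * deriv ψ μ) := by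
      refine integral_mono_ae hlow_int hF_int
        ((ae_restrict_iff' hSmeas).2 (ae_of_all _ fun μ hμ => ?_))
      have h1mu : 0 ≤ 1 - μ ^ 2 := by
        obtain ⟨ha, hb⟩ := hμ
        nlinarith
      have hkp := hkey_pt μ
      have hsecond : 0 ≤ Δt * (1 - μ ^ 2) * deriv v μ * deriv ψ μ := by
        rw [hderiv_eq μ hμ]
        have hc := (hc0 μ).1
        have : Δt * (1 - μ ^ 2) * (deriv ψ μ * c μ) * deriv ψ μ =
            Δt * (1 - μ ^ 2) * c μ * deriv ψ μ ^ 2 := by ring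
        rw [this]
        positivity
      simp only
      linarith
    have hsplit : (∫ μ in S, (min (ψ μ) 0 ^ 2 - ε / 2 * |ψ μ|)) =
        A - ε / 2 * B := by
      rw [integral_sub hmin_int (habs_int.const_mul (ε / 2)),
        integral_const_mul]
    rw [hsplit, hwv] at hlow
    linarith [hlow.trans hRHS]
  -- conclude A ≤ 0, hence A = 0
  have hA0 : 0 ≤ A := integral_nonneg fun μ => sq_nonneg _
  have hAle : A ≤ 0 := by
    by_contra h
    push_neg at h
    have hε : 0 < A / (B + 1) := by positivity
    have := key (A / (B + 1)) hε
    have hB1 : 0 < B + 1 := by linarith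
    rw [div_div, div_mul_eq_mul_div, le_div_iff₀ (by positivity)] at this
    nlinarith
  have hAeq : A = 0 := le_antisymm hAle hA0
  have hzero : (fun μ => min (ψ μ) 0 ^ 2) =ᵐ[volume.restrict S] 0 := by
    rw [← integral_eq_zero_iff_of_nonneg_ae
      (ae_of_all _ fun μ => sq_nonneg (min (ψ μ) 0)) hmin_int]
    exact hAeq
  filter_upwards [hzero] with μ hμ
  have : min (ψ μ) 0 = 0 := by
    have := hμ
    simp only [Pi.zero_apply] at this
    exact pow_eq_zero_iff (n := 2) (by norm_num) |>.mp this
  rcases le_total (ψ μ) 0 with h | h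
  · rw [min_eq_left h] at this
    simp [this]
  · exact h
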